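/- The smallest submonoid Ψ_0 of ℤ^n that is stable under the semisymmetric group W (permutations π of {1,…,n} with π(i) ≡ i mod 2) and contains all partitions (weakly decreasing tuples of nonnegative integers) equals the submonoid generated by the set {ε_i : i odd} ∪ {ε_i + ε_j : i odd, j even}, where ε_i denotes the i-th standard basis vector. -/

import Mathlib

open Finset

/-- A permutation of `{1,…,n}` is parity preserving (`π(i) ≡ i mod 2`). -/
def ParityPerm {n : ℕ} (π : Equiv.Perm (Fin n)) : Prop :=
  ∀ i : Fin n, ((π i : ℕ)) % 2 = (i : ℕ) % 2

/-- Partitions inside `ℤ^n`: weakly decreasing tuples of nonnegative integers. -/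
def PartSet (n : ℕ) : Set (Fin n → ℤ) :=
  {lam | (∀ i j : Fin n, i ≤ j → lam j ≤ lam i) ∧ ∀ i, 0 ≤ lam i}

/-- `Ψ_0`: the smallest `W`-stable additive submonoid of `ℤ^n` containing all partitions. -/
noncomputable def Psi0 (n : ℕ) : AddSubmonoid (Fin n → ℤ) :=
  sInf {S | PartSet n ⊆ S ∧
    ∀ π : Equiv.Perm (Fin n), ParityPerm π → ∀ x ∈ S, (fun i => x (π i)) ∈ S}

/-- The generating set. -/
def Gset (n : ℕ) : Set (Fin n → ℤ) :=
  {v | ∃ i : Fin n, Even (i : ℕ) ∧ v = Pi.single i 1} ∪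
  {v | ∃ i j : Fin n, Even (i : ℕ) ∧ Odd (j : ℕ) ∧
      v = Pi.single i 1 + Pi.single j 1}

lemma Gset_eq (n : ℕ) :
    ({v | ∃ i : Fin n, Even (i : ℕ) ∧ v = Pi.single i 1} ∪
     {v | ∃ i j : Fin n, Even (i : ℕ) ∧ Odd (j : ℕ) ∧
        v = Pi.single i 1 + Pi.single j 1} : Set (Fin n → ℤ)) = Gset n := rfl

/-- Prefix indicator vectors. -/
def pref (n k : ℕ) : Fin n → ℤ := fun i => if (i : ℕ) < k then 1 else 0

lemma pref_mem (n : ℕ) : ∀ k, pref n k ∈ AddSubmonoid.closure (Gset n) := by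
  intro k
  induction k using Nat.strong_induction_on with
  | _ k ih =>
  match k with
  | 0 =>
    have h : pref n 0 = 0 := by funext i; simp [pref]
    rw [h]; exact zero_mem _
  | 1 =>
    by_cases h : 0 < n
    · have e : pref n 1 = Pi.single (⟨0, h⟩ : Fin n) 1 := by
        funext i
        simp only [pref, Pi.single_apply, Fin.ext_iff]
        split_ifs <;> omega
      rw [e]
      exact AddSubmonoid.subset_closure (Or.inl ⟨⟨0, h⟩, by simp, rfl⟩)
    · have e : pref n 1 = 0 := by
        funext i; exact absurd i.isLt (by omega)
      rw [e]; exact zero_mem _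
  | (m + 2) =>
    by_cases h : m + 1 < n
    · have hm : m < n := by omega
      have key : pref n (m + 2) =
          pref n m + (Pi.single (⟨m, hm⟩ : Fin n) 1 + Pi.single (⟨m + 1, h⟩ : Fin n) 1) := by
        funext i
        simp only [pref, Pi.add_apply, Pi.single_apply, Fin.ext_iff]
        split_ifs <;> omega
      rw [key]
      refine add_mem (ih m (by omega)) (AddSubmonoid.subset_closure ?_)
      rcases Nat.even_or_odd m with he | ho
      · exact Or.inr ⟨⟨m, hm⟩, ⟨m + 1, h⟩, he, he.add_one, rfl⟩
      · exact Or.inr ⟨⟨m + 1, h⟩, ⟨m, hm⟩, ho.add_one, ho, add_comm _ _⟩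
    · have e : pref n (m + 2) = pref n (m + 1) := by
        funext i
        have := i.isLt
        simp only [pref]
        split_ifs <;> omega
      rw [e]; exact ih (m + 1) (by omega)

lemma part_mem {n : ℕ} : ∀ N (lam : Fin n → ℤ), lam ∈ PartSet n →
    (∑ i, lam i).toNat = N → lam ∈ AddSubmonoid.closure (Gset n) := by
  intro N
  induction N using Nat.strong_induction_on with
  | _ N ih =>
  intro lam hlam hN
  obtain ⟨hdec, hpos⟩ := hlam
  by_cases h0 : lam = 0
  · rw [h0]; exact zero_mem _
  · have hex : ∃ i, 0 < lam i := by
      by_contra hc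
      push_neg at hc
      exact h0 (funext fun i => le_antisymm (hc i) (hpos i))
    have hsne : (Finset.univ.filter fun i => 0 < lam i).Nonempty :=
      ⟨hex.choose, by simp [hex.choose_spec]⟩
    obtain ⟨k, hkmem, hkmax⟩ :
        ∃ k ∈ Finset.univ.filter (fun i => 0 < lam i),
          ∀ j ∈ Finset.univ.filter (fun i => 0 < lam i), j ≤ k :=
      ⟨_, Finset.max'_mem _ hsne, fun j hj => Finset.le_max' _ j hj⟩
    have hk_pos : 0 < lam k := (Finset.mem_filter.1 hkmem).2
    have hzero : ∀ j : Fin n, k < j → lam j = 0 := by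
      intro j hj
      by_contra hc
      have hjpos : 0 < lam j := lt_of_le_of_ne (hpos j) (Ne.symm hc)
      have hjs : j ≤ k := hkmax j (by simp [hjpos])
      exact absurd hjs (not_le.2 hj)
    have hone : ∀ i : Fin n, (i : ℕ) ≤ (k : ℕ) → 1 ≤ lam i := by
      intro i hi
      have := hdec i k hi
      omega
    set mu : Fin n → ℤ := lam - pref n ((k : ℕ) + 1) with hmu
    have hmu_apply : ∀ i, mu i = lam i - (if (i : ℕ) < (k : ℕ) + 1 then 1 else 0) :=
      fun i => rfl
    have hmu_part : mu ∈ PartSet n := by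
      constructor
      · intro i j hij
        have hij' : (i : ℕ) ≤ (j : ℕ) := hij
        have hd := hdec i j hij
        simp only [hmu_apply]
        split_ifs with h1 h2 h2
        · omega
        · omega
        · have hz : lam j = 0 := hzero j (Fin.lt_def.mpr (by omega))
          have h1' : 1 ≤ lam i := hone i (by omega)
          omega
        · omega
      · intro i
        simp only [hmu_apply]
        split_ifs with h1
        · have := hone i (by omega)
          omega
        · have := hpos i
          omega
    have hpref_nn : ∀ i : Fin n, 0 ≤ pref n ((k : ℕ) + 1) i := by
      intro i; simp only [pref]; split_ifs <;> omega
    have hsum_pref : 1 ≤ ∑ i, pref n ((k : ℕ) + 1) i := by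
      have h1 : pref n ((k : ℕ) + 1) k ≤ ∑ i, pref n ((k : ℕ) + 1) i :=
        Finset.single_le_sum (fun i _ => hpref_nn i) (Finset.mem_univ k)
      have h2 : pref n ((k : ℕ) + 1) k = 1 := by simp [pref]
      omega
    have hsum_mu_nonneg : 0 ≤ ∑ i, mu i := Finset.sum_nonneg fun i _ => hmu_part.2 i
    have hsplit : ∑ i, lam i = ∑ i, mu i + ∑ i, pref n ((k : ℕ) + 1) i := by
      rw [← Finset.sum_add_distrib]
      apply Finset.sum_congr rfl
      intro i _
      simp [hmu]
    have hsum_lt : (∑ i, mu i).toNat < N := by omega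
    have hdecomp : lam = mu + pref n ((k : ℕ) + 1) := by
      funext i; simp [hmu]
    rw [hdecomp]
    exact add_mem (ih _ hsum_lt mu hmu_part rfl) (pref_mem n _)

lemma closure_stable {n : ℕ} (π : Equiv.Perm (Fin n)) (hπ : ParityPerm π) :
    ∀ x ∈ AddSubmonoid.closure (Gset n),
      (fun i => x (π i)) ∈ AddSubmonoid.closure (Gset n) := by
  have hsingle : ∀ a : Fin n, (fun i => (Pi.single a 1 : Fin n → ℤ) (π i)) = (Pi.single (π.symm a) 1 : Fin n → ℤ) := by
    intro a; funext i
    by_cases h : i = π.symm a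
    · subst h; rw [Equiv.apply_symm_apply]; simp
    · have hne : π i ≠ a := fun hc => h (by rw [← hc, Equiv.symm_apply_apply])
      rw [Pi.single_eq_of_ne h, Pi.single_eq_of_ne hne]
  have hpar : ∀ a : Fin n, ((π.symm a : Fin n) : ℕ) % 2 = (a : ℕ) % 2 := by
    intro a
    have h := hπ (π.symm a)
    rw [Equiv.apply_symm_apply] at h
    exact h.symm
  intro x hx
  induction hx using AddSubmonoid.closure_induction with
  | mem y hy =>
    rcases hy with ⟨a, ha, rfl⟩ | ⟨a, b, ha, hb, rfl⟩
    · rw [hsingle a]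
      refine AddSubmonoid.subset_closure (Or.inl ⟨π.symm a, ?_, rfl⟩)
      rw [Nat.even_iff] at ha ⊢
      rw [hpar a]; exact ha
    · have e : (fun i => (Pi.single a 1 + Pi.single b 1 : Fin n → ℤ) (π i)) =
          Pi.single (π.symm a) 1 + Pi.single (π.symm b) 1 := by
        funext i
        have h1 := congrFun (hsingle a) i
        have h2 := congrFun (hsingle b) i
        simp only [Pi.add_apply]
        rw [h1, h2]
      rw [e]
      refine AddSubmonoid.subset_closure (Or.inr ⟨π.symm a, π.symm b, ?_, ?_, rfl⟩)
      · rw [Nat.even_iff] at ha ⊢; rw [hpar a]; exact ha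
      · rw [Nat.odd_iff] at hb ⊢; rw [hpar b]; exact hb
  | zero => exact zero_mem _
  | add x y hx hy ihx ihy => exact add_mem ihx ihy

lemma parity_swap {n : ℕ} {a b : Fin n} (h : (a : ℕ) % 2 = (b : ℕ) % 2) :
    ParityPerm (Equiv.swap a b) := by
  intro i
  rcases eq_or_ne i a with rfl | hia
  · rw [Equiv.swap_apply_left]; omega
  rcases eq_or_ne i b with rfl | hib
  · rw [Equiv.swap_apply_right]; omega
  · rw [Equiv.swap_apply_of_ne_of_ne hia hib]

lemma parity_mul {n : ℕ} {π σ : Equiv.Perm (Fin n)} (hπ : ParityPerm π) (hσ : ParityPerm σ) :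
    ParityPerm (π * σ) := by
  intro i
  have h1 := hπ (σ i)
  have h2 := hσ i
  simp only [Equiv.Perm.mul_apply]
  omega

lemma ne_of_parity {n : ℕ} {i j : Fin n} (h : (i : ℕ) % 2 ≠ (j : ℕ) % 2) : i ≠ j :=
  fun e => h (by rw [e])

/-- `Ψ_0` is generated by the `ε_i` with `i` odd (1-based; 0-based even here) together with
the `ε_i + ε_j` with `i` odd and `j` even (1-based). -/
theorem Psi0_eq_closure (n : ℕ) (hn : 1 ≤ n) :
    Psi0 n = AddSubmonoid.closure
      ({v | ∃ i : Fin n, Even (i : ℕ) ∧ v = Pi.single i 1} ∪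
       {v | ∃ i j : Fin n, Even (i : ℕ) ∧ Odd (j : ℕ) ∧
          v = Pi.single i 1 + Pi.single j 1}) := by
  rw [Gset_eq]
  apply le_antisymm
  · apply sInf_le
    constructor
    · intro lam hlam
      exact part_mem _ lam hlam rfl
    · exact fun π hπ x hx => closure_stable π hπ x hx
  · rw [AddSubmonoid.closure_le]
    intro x hx
    rw [SetLike.mem_coe, Psi0, AddSubmonoid.mem_sInf]
    rintro S ⟨hpart, hstab⟩
    rcases hx with ⟨i, hie, rfl⟩ | ⟨i, j, hie, hjo, rfl⟩
    · -- single i 1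
      set a : Fin n := ⟨0, hn⟩ with hadef
      have ha : Pi.single a (1 : ℤ) ∈ PartSet n := by
        constructor
        · intro p q hpq
          have hpq' : (p : ℕ) ≤ (q : ℕ) := hpq
          simp only [Pi.single_apply, hadef, Fin.ext_iff]
          split_ifs <;> omega
        · intro p
          simp only [Pi.single_apply]
          split_ifs <;> omega
      have hswap : ParityPerm (Equiv.swap a i) := by
        apply parity_swap
        rw [Nat.even_iff] at hie
        simp [hadef, hie]
      have hmem := hstab (Equiv.swap a i) hswap _ (hpart ha)
      have hiff : ∀ kk : Fin n, (Equiv.swap a i) kk = a ↔ kk = i := by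
        intro kk
        constructor
        · intro h
          exact (Equiv.swap a i).injective (h.trans (Equiv.swap_apply_right a i).symm)
        · rintro rfl; exact Equiv.swap_apply_right _ _
      have key : (fun kk => (Pi.single a 1 : Fin n → ℤ) ((Equiv.swap a i) kk)) =
          (Pi.single i 1 : Fin n → ℤ) := by
        funext kk
        simp only [Pi.single_apply, hiff kk]
      rwa [key] at hmem
    · -- single i 1 + single j 1
      have hj1 : 1 ≤ (j : ℕ) := by
        rw [Nat.odd_iff] at hjo; omega
      have h2n : 1 < n := lt_of_le_of_lt hj1 j.isLt
      set a : Fin n := ⟨0, hn⟩ with hadef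
      set b : Fin n := ⟨1, h2n⟩ with hbdef
      rw [Nat.even_iff] at hie
      rw [Nat.odd_iff] at hjo
      have hab : (a : ℕ) = 0 := rfl
      have hbb : (b : ℕ) = 1 := rfl
      have hv0 : Pi.single a (1 : ℤ) + Pi.single b 1 ∈ PartSet n := by
        constructor
        · intro p q hpq
          have hpq' : (p : ℕ) ≤ (q : ℕ) := hpq
          simp only [Pi.add_apply, Pi.single_apply, hadef, hbdef, Fin.ext_iff]
          split_ifs <;> omega
        · intro p
          simp only [Pi.add_apply, Pi.single_apply]
          split_ifs <;> omega
      set π : Equiv.Perm (Fin n) := Equiv.swap i a * Equiv.swap j b with hπdef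
      have hπpar : ParityPerm π := by
        apply parity_mul
        · exact parity_swap (by omega)
        · exact parity_swap (by omega)
      have hib : i ≠ b := ne_of_parity (by omega)
      have hij : i ≠ j := ne_of_parity (by omega)
      have hbi : b ≠ i := hib.symm
      have hba : b ≠ a := ne_of_parity (by omega)
      have hπi : π i = a := by
        simp only [hπdef, Equiv.Perm.mul_apply]
        rw [Equiv.swap_apply_of_ne_of_ne hij hib, Equiv.swap_apply_left]
      have hπj : π j = b := by
        simp only [hπdef, Equiv.Perm.mul_apply]
        rw [Equiv.swap_apply_left, Equiv.swap_apply_of_ne_of_ne hbi hba]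
      have hmem := hstab π hπpar _ (hpart hv0)
      have hiffa : ∀ kk : Fin n, π kk = a ↔ kk = i := by
        intro kk
        constructor
        · intro h; exact π.injective (h.trans hπi.symm)
        · rintro rfl; exact hπi
      have hiffb : ∀ kk : Fin n, π kk = b ↔ kk = j := by
        intro kk
        constructor
        · intro h; exact π.injective (h.trans hπj.symm)
        · rintro rfl; exact hπj
      have key : (fun kk => (Pi.single a 1 + Pi.single b 1 : Fin n → ℤ) (π kk)) =
          (Pi.single i 1 + Pi.single j 1 : Fin n → ℤ) := by
        funext kk
        simp only [Pi.add_apply, Pi.single_apply, hiffa kk, hiffb kk]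
      rwa [key] at hmem
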